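/- Let f : [0,∞) → ℝ be a differentiable, non-increasing, positive function with monotone hazard rate, and let 0 < x₁ < x₂. If |f'(x₂)|/f(x₂) ≤ 1/x₂, then x₂·f(x₂) > x₁·f(x₁). -/

import Mathlib

/-- MHR profit-change lemma, part 2: if |f'(x₂)|/f(x₂) ≤ 1/x₂ then
x₂·f(x₂) > x₁·f(x₁) for x₁ < x₂. -/
theorem mhr_profit_increasing (f : ℝ → ℝ) (x₁ x₂ : ℝ)
    (hx₁ : 0 < x₁) (hx₁₂ : x₁ < x₂)
    (hdiff : ∀ x ∈ Set.Icc x₁ x₂, DifferentiableAt ℝ f x)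
    (hpos : ∀ x ∈ Set.Icc x₁ x₂, 0 < f x)
    (hanti : ∀ x ∈ Set.Icc x₁ x₂, ∀ y ∈ Set.Icc x₁ x₂, x ≤ y → f y ≤ f x)
    (hmhr : ∀ x ∈ Set.Icc x₁ x₂, ∀ y ∈ Set.Icc x₁ x₂, x ≤ y →
      |deriv f x| / f x ≤ |deriv f y| / f y)
    (hcond : |deriv f x₂| / f x₂ ≤ 1 / x₂) :
    x₂ * f x₂ > x₁ * f x₁ := by
  have hx₂ : (0:ℝ) < x₂ := hx₁.trans hx₁₂
  set g : ℝ → ℝ := fun x => x * f x with hg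
  have hgd : ∀ x ∈ Set.Icc x₁ x₂, HasDerivAt g (f x + x * deriv f x) x := by
    intro x hx
    exact ((hasDerivAt_id x).mul ((hdiff x hx).hasDerivAt)).congr_deriv (by simp)
  have hcont : ContinuousOn g (Set.Icc x₁ x₂) := fun x hx =>
    ((hgd x hx).continuousAt).continuousWithinAt
  have hmono : StrictMonoOn g (Set.Icc x₁ x₂) := by
    apply strictMonoOn_of_deriv_pos (convex_Icc x₁ x₂) hcont
    intro x hx
    rw [interior_Icc] at hx
    have hxI : x ∈ Set.Icc x₁ x₂ := ⟨hx.1.le, hx.2.le⟩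
    rw [(hgd x hxI).deriv]
    have hfx : 0 < f x := hpos x hxI
    have hfx₂ : 0 < f x₂ := hpos x₂ ⟨hx₁₂.le, le_rfl⟩
    have h1 : |deriv f x| / f x ≤ 1 / x₂ :=
      (hmhr x hxI x₂ ⟨hx₁₂.le, le_rfl⟩ hx.2.le).trans hcond
    have h2 : |deriv f x| ≤ f x / x₂ := by
      rw [div_le_div_iff₀ hfx hx₂] at h1
      rw [le_div_iff₀ hx₂]
      linarith
    have h3 : -deriv f x ≤ f x / x₂ := by
      have := neg_abs_le (deriv f x); linarith
    have hxlt : x < x₂ := hx.2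
    have hx0 : 0 < x := hx₁.trans hx.1
    have : x * (f x / x₂) < f x := by
      rw [mul_div_assoc']
      rw [div_lt_iff₀ hx₂]
      nlinarith
    nlinarith [mul_le_mul_of_nonneg_left h3 hx0.le]
  have := hmono ⟨le_rfl, hx₁₂.le⟩ ⟨hx₁₂.le, le_rfl⟩ hx₁₂
  simpa [hg] using this
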